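/- Let (S,R) be a serial transition system and 𝒫(S) its power set algebra with ◇a := R⁻¹[a] and EU the least fixpoint operation as above. Define EG(a₁,a₂) as the greatest subset x of S satisfying x ⊆ a₁ ∩ ◇EU(a₂ ∩ x, a₁). Then for any s ∈ S: s ∈ EG(a₁,a₂) if and only if there exists an infinite R-path s = s₀, s₁, s₂, … such that sₜ ∈ a₁ for all t ≥ 0 and sₜ ∈ a₂ for infinitely many t. -/

import Mathlib

private def diaD {S : Type*} (R : S → S → Prop) (a : Set S) : Set S :=
  {s | ∃ t ∈ a, R s t}

private def euD {S : Type*} (R : S → S → Prop) (a b : Set S) : Set S :=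
  ⋂₀ {x | a ∪ (b ∩ diaD R x) ⊆ x}

private def pathTo {S : Type*} (R : S → S → Prop) (b a : Set S) (s : S) : Prop :=
  ∃ n, ∃ u : ℕ → S, u 0 = s ∧ (∀ i < n, R (u i) (u (i + 1))) ∧
    (∀ i < n, u i ∈ b) ∧ u n ∈ a

private lemma pref_closed {S : Type*} {R : S → S → Prop} {a b x : Set S}
    (hx : a ∪ (b ∩ diaD R x) ⊆ x) :
    ∀ n (u : ℕ → S), (∀ i < n, R (u i) (u (i + 1))) →
      (∀ i < n, u i ∈ b) → u n ∈ a → u 0 ∈ x := by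
  intro n
  induction n with
  | zero => intro u _ _ hend; exact hx (Or.inl hend)
  | succ n ih =>
    intro u hstep hb hend
    refine hx (Or.inr ⟨hb 0 (Nat.succ_pos n), ⟨u 1, ?_, hstep 0 (Nat.succ_pos n)⟩⟩)
    exact ih (fun i => u (i + 1)) (fun i hi => hstep (i + 1) (by omega))
      (fun i hi => hb (i + 1) (by omega)) hend

private lemma mem_euD {S : Type*} {R : S → S → Prop} {a b : Set S} {s : S} :
    s ∈ euD R a b ↔ pathTo R b a s := by
  constructor
  · intro hs
    refine Set.mem_sInter.mp hs {t | pathTo R b a t} ?_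
    rintro t (ht | ⟨htb, ⟨t', ht', hR⟩⟩)
    · exact ⟨0, fun _ => t, rfl, fun i hi => absurd hi (Nat.not_lt_zero i),
        fun i hi => absurd hi (Nat.not_lt_zero i), ht⟩
    · obtain ⟨n, w, hw0, hstep, hb, hend⟩ := ht'
      refine ⟨n + 1, fun i => Nat.casesOn i t w, rfl, ?_, ?_, hend⟩
      · intro i hi
        cases i with
        | zero => simpa [hw0] using hR
        | succ i => exact hstep i (by omega)
      · intro i hi
        cases i with
        | zero => exact htb
        | succ i => exact hb i (by omega)
  · rintro ⟨n, u, hu0, hstep, hb, hend⟩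
    refine Set.mem_sInter.mpr fun x hx => ?_
    exact hu0 ▸ pref_closed hx n u hstep hb hend

private lemma euD_mono {S : Type*} {R : S → S → Prop} {a a' b : Set S} (h : a ⊆ a') :
    euD R a b ⊆ euD R a' b := by
  intro s hs
  refine Set.mem_sInter.mpr fun x hx => ?_
  refine Set.mem_sInter.mp hs x ?_
  exact fun t ht => hx (ht.imp (fun h' => h h') id)

/-- Characterization of EG in the complex algebra of a serial transition system
    by fair infinite R-paths. -/
theorem stmt_15 {S : Type*} (R : S → S → Prop)
    (hser : ∀ s : S, ∃ s', R s s')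
    (dia : Set S → Set S) (hdia : ∀ a : Set S, dia a = {s | ∃ t ∈ a, R s t})
    (EU : Set S → Set S → Set S)
    (hEU : ∀ a₁ a₂ : Set S, EU a₁ a₂ = ⋂₀ {x : Set S | a₁ ∪ (a₂ ∩ dia x) ⊆ x})
    (EG : Set S → Set S → Set S)
    (hEG : ∀ a₁ a₂ : Set S,
      EG a₁ a₂ = ⋃₀ {x : Set S | x ⊆ a₁ ∩ dia (EU (a₂ ∩ x) a₁)})
    (a₁ a₂ : Set S) (s : S) :
    s ∈ EG a₁ a₂ ↔
      ∃ f : ℕ → S, f 0 = s ∧ (∀ t, R (f t) (f (t + 1))) ∧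
        (∀ t, f t ∈ a₁) ∧ (∀ N, ∃ t ≥ N, f t ∈ a₂) := by
  have hdia' : dia = diaD R := funext fun a => hdia a
  subst hdia'
  have hEU' : EU = euD R := funext fun a => funext fun b => hEU a b
  subst hEU'
  rw [hEG]
  set X : Set S := ⋃₀ {x : Set S | x ⊆ a₁ ∩ diaD R (euD R (a₂ ∩ x) a₁)} with hX
  constructor
  · intro hs
    haveI : Nonempty S := ⟨s⟩
    -- every point of X gives a segment ending in a₂ ∩ X
    have step : ∀ y ∈ X, ∃ m, 1 ≤ m ∧ ∃ u : ℕ → S, u 0 = y ∧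
        (∀ i < m, R (u i) (u (i + 1))) ∧ (∀ i < m, u i ∈ a₁) ∧
        (u m ∈ a₂ ∧ u m ∈ X) := by
      intro y hy
      obtain ⟨x, hx, hyx⟩ := hy
      obtain ⟨hya, t, ht, hRt⟩ := hx hyx
      have hxX : x ⊆ X := Set.subset_sUnion_of_mem hx
      have ht' : t ∈ euD R (a₂ ∩ X) a₁ :=
        euD_mono (Set.inter_subset_inter_right a₂ hxX) ht
      obtain ⟨n, w, hw0, hstep, hb, hend⟩ := mem_euD.mp ht'
      refine ⟨n + 1, by omega, fun i => Nat.casesOn i y w, rfl, ?_, ?_, ?_⟩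
      · intro i hi
        cases i with
        | zero => simpa [hw0] using hRt
        | succ i => exact hstep i (by omega)
      · intro i hi
        cases i with
        | zero => exact hya
        | succ i => exact hb i (by omega)
      · exact ⟨hend.1, hend.2⟩
    choose! m hm u hu0 hstep ha1 hend using step
    -- build the infinite path as a state machine (segment start, position)
    set next : S × ℕ → S × ℕ :=
      fun p => if p.2 + 1 = m p.1 then (u p.1 (m p.1), 0) else (p.1, p.2 + 1) with hnext
    set h : ℕ → S × ℕ := fun t => next^[t] (s, 0) with hh
    have hsucc : ∀ t, h (t + 1) = next (h t) := by
      intro t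
      simp [hh, Function.iterate_succ_apply']
    set f : ℕ → S := fun t => u (h t).1 (h t).2 with hf
    have hinv : ∀ t, (h t).1 ∈ X ∧ (h t).2 < m (h t).1 := by
      intro t
      induction t with
      | zero => exact ⟨hs, by have := hm s hs; simpa [hh] using Nat.lt_of_succ_le this⟩
      | succ t ih =>
        rw [hsucc t, hnext]
        by_cases hc : (h t).2 + 1 = m (h t).1
        · simp only [if_pos hc]
          have h2 : u (h t).1 (m (h t).1) ∈ X := (hend _ ih.1).2
          exact ⟨h2, hm _ h2⟩
        · simp only [if_neg hc]
          exact ⟨ih.1, by omega⟩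
    have hkey : ∀ t, f (t + 1) = u (h t).1 ((h t).2 + 1) := by
      intro t
      rw [hf]
      simp only
      rw [hsucc t, hnext]
      by_cases hc : (h t).2 + 1 = m (h t).1
      · simp only [if_pos hc]
        have h2 : u (h t).1 (m (h t).1) ∈ X := (hend _ (hinv t).1).2
        rw [hu0 _ h2, hc]
      · simp only [if_neg hc]
    refine ⟨f, ?_, ?_, ?_, ?_⟩
    · show u (h 0).1 (h 0).2 = s
      simp only [hh, Function.iterate_zero_apply]
      exact hu0 s hs
    · intro t
      rw [hkey t]
      exact hstep _ (hinv t).1 _ (hinv t).2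
    · intro t
      exact ha1 _ (hinv t).1 _ (hinv t).2
    · -- fairness
      have aux : ∀ c t, m (h t).1 - (h t).2 ≤ c → ∃ d, f (t + d) ∈ a₂ := by
        intro c
        induction c with
        | zero => intro t hc; exact absurd (hinv t).2 (by omega)
        | succ c ih =>
          intro t hc
          by_cases hcase : (h t).2 + 1 = m (h t).1
          · refine ⟨1, ?_⟩
            rw [hkey t, hcase]
            exact (hend _ (hinv t).1).1
          · have hnx : h (t + 1) = ((h t).1, (h t).2 + 1) := by
              rw [hsucc t, hnext]; simp only [if_neg hcase]
            have hle : m (h (t + 1)).1 - (h (t + 1)).2 ≤ c := by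
              rw [hnx]; simp only; omega
            obtain ⟨d, hd⟩ := ih (t + 1) hle
            exact ⟨1 + d, by rwa [← Nat.add_assoc]⟩
      intro N
      obtain ⟨d, hd⟩ := aux (m (h N).1 - (h N).2) N le_rfl
      exact ⟨N + d, Nat.le_add_right N d, hd⟩
  · rintro ⟨f, hf0, hfR, hfa1, hfa2⟩
    set Y : Set S := {y | ∃ g : ℕ → S, g 0 = y ∧ (∀ t, R (g t) (g (t + 1))) ∧
      (∀ t, g t ∈ a₁) ∧ (∀ N, ∃ t ≥ N, g t ∈ a₂)} with hYdef
    have hYshift : ∀ (g : ℕ → S), (∀ t, R (g t) (g (t + 1))) → (∀ t, g t ∈ a₁) →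
        (∀ N, ∃ t ≥ N, g t ∈ a₂) → ∀ k, g k ∈ Y := by
      intro g hgR hga hgfair k
      refine ⟨fun i => g (k + i), by show g (k + 0) = g k; rw [Nat.add_zero], ?_, fun t => hga (k + t), ?_⟩
      · intro t
        have := hgR (k + t)
        rwa [show k + t + 1 = k + (t + 1) by omega] at this
      · intro N
        obtain ⟨t', ht', ha⟩ := hgfair (k + N)
        refine ⟨t' - k, by omega, ?_⟩
        show g (k + (t' - k)) ∈ a₂
        rwa [show k + (t' - k) = t' by omega]
    have hY : Y ⊆ a₁ ∩ diaD R (euD R (a₂ ∩ Y) a₁) := by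
      rintro y ⟨g, hg0, hgR, hga, hgfair⟩
      refine ⟨hg0 ▸ hga 0, ⟨g 1, ?_, hg0 ▸ hgR 0⟩⟩
      obtain ⟨t, ht1, hta⟩ := hgfair 1
      refine mem_euD.mpr ⟨t - 1, fun i => g (i + 1), rfl, ?_, fun i _ => hga (i + 1), ?_⟩
      · intro i _
        exact hgR (i + 1)
      · show g (t - 1 + 1) ∈ a₂ ∩ Y
        rw [show t - 1 + 1 = t by omega]
        exact ⟨hta, hYshift g hgR hga hgfair t⟩
    exact ⟨Y, hY, ⟨f, hf0, hfR, hfa1, hfa2⟩⟩
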